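/- Let l : ℝ → ℝ be convex, increasing, bounded below, and let g : ℝ^d → ℝ. Let μ be a probability measure on ℝ^d with finite p-th moment (p > 1) which is non-degenerate in the sense that μ({x : ⟨a, x − x₀⟩ > 0}) > 0 for every a ≠ 0, and assume f(x,a) := l(g(x) + ⟨a, x − x₀⟩) satisfies f(x,a) ≤ c_r(1+|x|^p) for all |a| ≤ r. Then for every δ ≥ 0 the value V(δ) = inf_{a∈ℝ^d} sup_{ν: W_p(μ,ν)≤δ} ∫ l(g(x) + ⟨a, x−x₀⟩) ν(dx) is finite and the infimum over a is attained. -/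

import Mathlib

open Set MeasureTheory Filter Topology
open scoped ENNReal RealInnerProductSpace

/-- The `p`-Wasserstein distance on `ℝ^d` with respect to the Euclidean norm. -/
noncomputable def Wp {d : ℕ} (p : ℝ)
    (μ ν : Measure (EuclideanSpace ℝ (Fin d))) : ℝ≥0∞ :=
  ⨅ π ∈ {π : Measure (EuclideanSpace ℝ (Fin d) × EuclideanSpace ℝ (Fin d)) |
      π.map Prod.fst = μ ∧ π.map Prod.snd = ν},
    (∫⁻ z, ENNReal.ofReal (‖z.1 - z.2‖ ^ p) ∂π) ^ (1 / p)

set_option maxHeartbeats 2000000 in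
/-- Existence of an optimizer for the robust expected-loss problem
`V(δ) = inf_a sup_{ν ∈ B_δ(μ)} ∫ l(g(x) + ⟨a, x − x₀⟩) dν(x)`:
the value is finite (the inner suprema are bounded above), and the infimum over `a`
is attained, under convexity, monotonicity, lower boundedness of `l`, a growth
bound, and non-degeneracy of `μ`. -/
theorem stmt11 {d : ℕ} (p : ℝ) (hp : 1 < p)
    (μ : Measure (EuclideanSpace ℝ (Fin d))) [IsProbabilityMeasure μ]
    (hmom : Integrable (fun x => ‖x‖ ^ p) μ)
    (l : ℝ → ℝ) (hconv : ConvexOn ℝ Set.univ l) (hmono : Monotone l)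
    (hbb : BddBelow (Set.range l))
    (g : EuclideanSpace ℝ (Fin d) → ℝ) (hg : Measurable g)
    (x₀ : EuclideanSpace ℝ (Fin d))
    (hgrowth : ∀ r : ℝ, 0 < r → ∃ c : ℝ, 0 < c ∧ ∀ a : EuclideanSpace ℝ (Fin d),
      ‖a‖ ≤ r → ∀ x, l (g x + ⟪a, x - x₀⟫) ≤ c * (1 + ‖x‖ ^ p))
    (hnd : ∀ a : EuclideanSpace ℝ (Fin d), a ≠ 0 → μ {x | 0 < ⟪a, x - x₀⟫} ≠ 0)
    (δ : ℝ) (hδ : 0 ≤ δ) :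
    (∀ a : EuclideanSpace ℝ (Fin d),
      BddAbove {r : ℝ | ∃ ν : Measure (EuclideanSpace ℝ (Fin d)), IsProbabilityMeasure ν ∧
        Wp p μ ν ≤ ENNReal.ofReal δ ∧ r = ∫ x, l (g x + ⟪a, x - x₀⟫) ∂ν}) ∧
    ∃ astar : EuclideanSpace ℝ (Fin d), ∀ a : EuclideanSpace ℝ (Fin d),
      sSup {r : ℝ | ∃ ν : Measure (EuclideanSpace ℝ (Fin d)), IsProbabilityMeasure ν ∧
        Wp p μ ν ≤ ENNReal.ofReal δ ∧ r = ∫ x, l (g x + ⟪astar, x - x₀⟫) ∂ν}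
      ≤ sSup {r : ℝ | ∃ ν : Measure (EuclideanSpace ℝ (Fin d)), IsProbabilityMeasure ν ∧
        Wp p μ ν ≤ ENNReal.ofReal δ ∧ r = ∫ x, l (g x + ⟪a, x - x₀⟫) ∂ν} := by
  have hp0 : 0 < p := lt_trans one_pos hp
  have hp0' : p ≠ 0 := ne_of_gt hp0
  -- continuity/measurability of x ↦ ‖x‖^p
  have hnc : Continuous (fun x : (EuclideanSpace ℝ (Fin d)) => ‖x‖ ^ p) :=
    (continuous_norm).rpow_const (fun x => Or.inr hp0.le)
  set M : ℝ≥0∞ := ∫⁻ x, ENNReal.ofReal (‖x‖ ^ p) ∂μ with hMdef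
  have hM : M ≠ ⊤ := by
    have h1 : 0 ≤ᵐ[μ] (fun x : (EuclideanSpace ℝ (Fin d)) => ‖x‖ ^ p) :=
      Filter.Eventually.of_forall (fun x => Real.rpow_nonneg (norm_nonneg x) p)
    exact ((hasFiniteIntegral_iff_ofReal h1).1 hmom.2).ne
  -- self-coupling: Wp p μ μ = 0
  have hself : Wp p μ μ ≤ ENNReal.ofReal δ := by
    have hmeas : Measurable (fun z : (EuclideanSpace ℝ (Fin d)) × (EuclideanSpace ℝ (Fin d)) => ENNReal.ofReal (‖z.1 - z.2‖ ^ p)) :=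
      (ENNReal.measurable_ofReal.comp
        (((continuous_fst.sub continuous_snd).norm.rpow_const
          (fun x => Or.inr hp0.le)).measurable))
    have hdiag : Measurable (fun x : (EuclideanSpace ℝ (Fin d)) => (x, x)) := measurable_id.prodMk measurable_id
    have hmem : (μ.map (fun x : (EuclideanSpace ℝ (Fin d)) => (x, x))) ∈
        {π : Measure ((EuclideanSpace ℝ (Fin d)) × (EuclideanSpace ℝ (Fin d))) | π.map Prod.fst = μ ∧ π.map Prod.snd = μ} := by
      constructor
      · rw [Measure.map_map measurable_fst hdiag]
        have h : (Prod.fst ∘ fun x : (EuclideanSpace ℝ (Fin d)) => (x, x)) = id := rfl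
        rw [h, Measure.map_id]
      · rw [Measure.map_map measurable_snd hdiag]
        have h : (Prod.snd ∘ fun x : (EuclideanSpace ℝ (Fin d)) => (x, x)) = id := rfl
        rw [h, Measure.map_id]
    have hint : (∫⁻ z, ENNReal.ofReal (‖z.1 - z.2‖ ^ p) ∂(μ.map (fun x : (EuclideanSpace ℝ (Fin d)) => (x, x)))) = 0 := by
      rw [lintegral_map hmeas hdiag]
      simp [Real.zero_rpow hp0']
    refine le_trans (iInf₂_le_of_le _ hmem ?_) zero_le
    rw [hint, ENNReal.zero_rpow_of_pos (by positivity)]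
  -- moment bound
  set K : ℝ≥0∞ := 2 ^ (p - 1) * (M + ENNReal.ofReal (δ + 1) ^ p) with hKdef
  have hK : K ≠ ⊤ := by
    apply ENNReal.mul_ne_top
    · exact ENNReal.rpow_ne_top_of_nonneg (by linarith) (by norm_num)
    · exact ENNReal.add_ne_top.2 ⟨hM, ENNReal.rpow_ne_top_of_nonneg hp0.le ENNReal.ofReal_ne_top⟩
  have key : ∀ ν : Measure (EuclideanSpace ℝ (Fin d)), Wp p μ ν ≤ ENNReal.ofReal δ →
      (∫⁻ x, ENNReal.ofReal (‖x‖ ^ p) ∂ν) ≤ K := by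
    intro ν hW
    have hlt : Wp p μ ν < ENNReal.ofReal (δ + 1) := by
      refine lt_of_le_of_lt hW ?_
      rw [ENNReal.ofReal_lt_ofReal_iff (by linarith)]
      linarith
    rw [Wp] at hlt
    simp only [iInf_lt_iff] at hlt
    obtain ⟨π, ⟨hπ1, hπ2⟩, hπlt⟩ := hlt
    have hmeas : Measurable (fun z : (EuclideanSpace ℝ (Fin d)) × (EuclideanSpace ℝ (Fin d)) => ENNReal.ofReal (‖z.1 - z.2‖ ^ p)) :=
      (ENNReal.measurable_ofReal.comp
        (((continuous_fst.sub continuous_snd).norm.rpow_const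
          (fun x => Or.inr hp0.le)).measurable))
    have hI : (∫⁻ z, ENNReal.ofReal (‖z.1 - z.2‖ ^ p) ∂π) ≤ ENNReal.ofReal (δ + 1) ^ p := by
      have h2 := ENNReal.rpow_le_rpow hπlt.le hp0.le
      rwa [← ENNReal.rpow_mul, one_div, inv_mul_cancel₀ hp0', ENNReal.rpow_one] at h2
    -- pointwise bound
    have hpt : ∀ z : (EuclideanSpace ℝ (Fin d)) × (EuclideanSpace ℝ (Fin d)), ENNReal.ofReal (‖z.2‖ ^ p) ≤
        2 ^ (p - 1) * (ENNReal.ofReal (‖z.1‖ ^ p) + ENNReal.ofReal (‖z.1 - z.2‖ ^ p)) := by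
      intro z
      have h1 : ENNReal.ofReal (‖z.2‖ ^ p) = ENNReal.ofReal ‖z.2‖ ^ p :=
        (ENNReal.ofReal_rpow_of_nonneg (norm_nonneg _) hp0.le).symm
      have h2 : ENNReal.ofReal (‖z.1‖ ^ p) = ENNReal.ofReal ‖z.1‖ ^ p :=
        (ENNReal.ofReal_rpow_of_nonneg (norm_nonneg _) hp0.le).symm
      have h3 : ENNReal.ofReal (‖z.1 - z.2‖ ^ p) = ENNReal.ofReal ‖z.1 - z.2‖ ^ p :=
        (ENNReal.ofReal_rpow_of_nonneg (norm_nonneg _) hp0.le).symm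
      rw [h1, h2, h3]
      calc ENNReal.ofReal ‖z.2‖ ^ p
          ≤ (ENNReal.ofReal ‖z.1‖ + ENNReal.ofReal ‖z.1 - z.2‖) ^ p := by
            apply ENNReal.rpow_le_rpow _ hp0.le
            rw [← ENNReal.ofReal_add (norm_nonneg _) (norm_nonneg _)]
            apply ENNReal.ofReal_le_ofReal
            calc ‖z.2‖ = ‖z.1 - (z.1 - z.2)‖ := by rw [sub_sub_cancel]
              _ ≤ ‖z.1‖ + ‖z.1 - z.2‖ := norm_sub_le _ _
        _ ≤ 2 ^ (p - 1) * (ENNReal.ofReal ‖z.1‖ ^ p + ENNReal.ofReal ‖z.1 - z.2‖ ^ p) :=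
            ENNReal.rpow_add_le_mul_rpow_add_rpow _ _ hp.le
    have hmE : Measurable (fun x : (EuclideanSpace ℝ (Fin d)) => ENNReal.ofReal (‖x‖ ^ p)) :=
      ENNReal.measurable_ofReal.comp hnc.measurable
    have hm1 : Measurable (fun z : (EuclideanSpace ℝ (Fin d)) × (EuclideanSpace ℝ (Fin d)) => ENNReal.ofReal (‖z.1‖ ^ p)) :=
      (ENNReal.measurable_ofReal.comp ((hnc.comp continuous_fst).measurable))
    calc (∫⁻ x, ENNReal.ofReal (‖x‖ ^ p) ∂ν)
        = ∫⁻ z, ENNReal.ofReal (‖z.2‖ ^ p) ∂π := by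
          rw [← hπ2, lintegral_map hmE measurable_snd]
      _ ≤ ∫⁻ z, 2 ^ (p - 1) * (ENNReal.ofReal (‖z.1‖ ^ p) + ENNReal.ofReal (‖z.1 - z.2‖ ^ p)) ∂π :=
          lintegral_mono hpt
      _ = 2 ^ (p - 1) * ((∫⁻ z, ENNReal.ofReal (‖z.1‖ ^ p) ∂π)
            + ∫⁻ z, ENNReal.ofReal (‖z.1 - z.2‖ ^ p) ∂π) := by
          rw [lintegral_const_mul (f := fun z : (EuclideanSpace ℝ (Fin d)) × (EuclideanSpace ℝ (Fin d)) => ENNReal.ofReal (‖z.1‖ ^ p) + ENNReal.ofReal (‖z.1 - z.2‖ ^ p)) _ (hm1.add hmeas), lintegral_add_left hm1]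
      _ ≤ 2 ^ (p - 1) * (M + ENNReal.ofReal (δ + 1) ^ p) := by
          gcongr
          rw [hMdef, ← hπ1, lintegral_map hmE measurable_fst]
      _ = K := rfl
  -- continuity of l
  have hlc : Continuous l := by
    rw [← continuousOn_univ]
    exact hconv.continuousOn isOpen_univ
  obtain ⟨m, hm⟩ := hbb
  have hml : ∀ t : ℝ, m ≤ l t := fun t => hm ⟨t, rfl⟩
  -- the loss as a function of x, measurability
  have hfm : ∀ a : (EuclideanSpace ℝ (Fin d)), Measurable (fun x : (EuclideanSpace ℝ (Fin d)) => l (g x + ⟪a, x - x₀⟫)) := by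
    intro a
    apply hlc.measurable.comp
    exact hg.add ((continuous_const.inner (continuous_id.sub continuous_const)).measurable)
  -- the key integrability + bound lemma
  have hIa : ∀ a : (EuclideanSpace ℝ (Fin d)), ∃ c : ℝ, 0 < c ∧ ∀ ν : Measure (EuclideanSpace ℝ (Fin d)), IsProbabilityMeasure ν →
      Wp p μ ν ≤ ENNReal.ofReal δ →
      Integrable (fun x => l (g x + ⟪a, x - x₀⟫)) ν ∧
      ∫ x, l (g x + ⟪a, x - x₀⟫) ∂ν ≤ c * (1 + K.toReal) := by
    intro a
    obtain ⟨c, hc, hcb⟩ := hgrowth (‖a‖ + 1) (by positivity)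
    have hba : ‖a‖ ≤ ‖a‖ + 1 := by linarith
    refine ⟨c, hc, fun ν hν hW => ?_⟩
    have hmom' := key ν hW
    have hnn : 0 ≤ᵐ[ν] (fun x : (EuclideanSpace ℝ (Fin d)) => ‖x‖ ^ p) :=
      Filter.Eventually.of_forall (fun x => Real.rpow_nonneg (norm_nonneg x) p)
    have hIν : Integrable (fun x : (EuclideanSpace ℝ (Fin d)) => ‖x‖ ^ p) ν := by
      refine ⟨hnc.aestronglyMeasurable, ?_⟩
      rw [hasFiniteIntegral_iff_ofReal hnn]
      exact lt_of_le_of_lt hmom' hK.lt_top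
    have hIνval : ∫ x, ‖x‖ ^ p ∂ν ≤ K.toReal := by
      rw [integral_eq_lintegral_of_nonneg_ae hnn hnc.aestronglyMeasurable]
      exact ENNReal.toReal_mono hK hmom'
    have hub : ∀ x : (EuclideanSpace ℝ (Fin d)), l (g x + ⟪a, x - x₀⟫) ≤ c * (1 + ‖x‖ ^ p) := fun x => hcb a hba x
    have hbint : Integrable (fun x : (EuclideanSpace ℝ (Fin d)) => (|m| + c) + c * ‖x‖ ^ p) ν :=
      (integrable_const _).add (hIν.const_mul c)
    have hint : Integrable (fun x => l (g x + ⟪a, x - x₀⟫)) ν := by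
      refine Integrable.mono' hbint
        (hfm a).aestronglyMeasurable (Filter.Eventually.of_forall fun x => ?_)
      have h1 : 0 ≤ ‖x‖ ^ p := Real.rpow_nonneg (norm_nonneg x) p
      rw [Real.norm_eq_abs, abs_le]
      constructor
      · nlinarith [hml (g x + ⟪a, x - x₀⟫), neg_abs_le m, abs_nonneg m]
      · nlinarith [hub x, abs_nonneg m]
    refine ⟨hint, ?_⟩
    calc ∫ x, l (g x + ⟪a, x - x₀⟫) ∂ν ≤ ∫ x, c * (1 + ‖x‖ ^ p) ∂ν := by
          refine integral_mono hint ?_ hub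
          exact ((integrable_const (1:ℝ)).add hIν).const_mul c
      _ = c * (1 + ∫ x, ‖x‖ ^ p ∂ν) := by
          rw [integral_const_mul, integral_add (integrable_const _) hIν, integral_const]
          simp
      _ ≤ c * (1 + K.toReal) := by nlinarith
  -- the sets and value function
  set Sa : (EuclideanSpace ℝ (Fin d)) → Set ℝ := fun a => {r : ℝ | ∃ ν : Measure (EuclideanSpace ℝ (Fin d)), IsProbabilityMeasure ν ∧
      Wp p μ ν ≤ ENNReal.ofReal δ ∧ r = ∫ x, l (g x + ⟪a, x - x₀⟫) ∂ν} with hSadef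
  have hmemμ : ∀ a : (EuclideanSpace ℝ (Fin d)), (∫ x, l (g x + ⟪a, x - x₀⟫) ∂μ) ∈ Sa a :=
    fun a => ⟨μ, inferInstance, hself, rfl⟩
  have hne : ∀ a : (EuclideanSpace ℝ (Fin d)), (Sa a).Nonempty := fun a => ⟨_, hmemμ a⟩
  have hbdd : ∀ a : (EuclideanSpace ℝ (Fin d)), BddAbove (Sa a) := by
    intro a
    obtain ⟨c, hc, hcb⟩ := hIa a
    exact ⟨c * (1 + K.toReal), fun r hr => by
      obtain ⟨ν, hν, hW, rfl⟩ := hr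
      exact (hcb ν hν hW).2⟩
  set F : (EuclideanSpace ℝ (Fin d)) → ℝ := fun a => sSup (Sa a) with hFdef
  have hFlb : ∀ a : (EuclideanSpace ℝ (Fin d)), (∫ x, l (g x + ⟪a, x - x₀⟫) ∂μ) ≤ F a :=
    fun a => le_csSup (hbdd a) (hmemμ a)
  -- convexity of the value function
  have hFconv : ConvexOn ℝ Set.univ F := by
    refine ⟨convex_univ, fun a _ b _ ta tb hta htb hab => ?_⟩
    simp only [smul_eq_mul]
    refine csSup_le (hne _) ?_
    rintro r ⟨ν, hν, hW, rfl⟩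
    obtain ⟨ca, hca, hcba⟩ := hIa a
    obtain ⟨cb, hcb, hcbb⟩ := hIa b
    obtain ⟨cc, hcc, hcbc⟩ := hIa (ta • a + tb • b)
    have hia := (hcba ν hν hW).1
    have hib := (hcbb ν hν hW).1
    have hic := (hcbc ν hν hW).1
    have hpt : ∀ x : (EuclideanSpace ℝ (Fin d)),
        l (g x + ⟪ta • a + tb • b, x - x₀⟫) ≤
          ta * l (g x + ⟪a, x - x₀⟫) + tb * l (g x + ⟪b, x - x₀⟫) := by
      intro x
      have hinner : ⟪ta • a + tb • b, x - x₀⟫ = ta * ⟪a, x - x₀⟫ + tb * ⟪b, x - x₀⟫ := by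
        rw [inner_add_left, real_inner_smul_left, real_inner_smul_left]
      have harg : g x + ⟪ta • a + tb • b, x - x₀⟫ =
          ta * (g x + ⟪a, x - x₀⟫) + tb * (g x + ⟪b, x - x₀⟫) := by
        rw [hinner]; linear_combination (g x) * hab.symm
      rw [harg]
      have := hconv.2 (Set.mem_univ (g x + ⟪a, x - x₀⟫)) (Set.mem_univ (g x + ⟪b, x - x₀⟫))
        hta htb hab
      simpa [smul_eq_mul] using this
    calc ∫ x, l (g x + ⟪ta • a + tb • b, x - x₀⟫) ∂ν
        ≤ ∫ x, (ta * l (g x + ⟪a, x - x₀⟫) + tb * l (g x + ⟪b, x - x₀⟫)) ∂ν :=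
          integral_mono hic ((hia.const_mul ta).add (hib.const_mul tb)) hpt
      _ = ta * (∫ x, l (g x + ⟪a, x - x₀⟫) ∂ν) + tb * (∫ x, l (g x + ⟪b, x - x₀⟫) ∂ν) := by
          rw [integral_add (hia.const_mul ta) (hib.const_mul tb),
            integral_const_mul, integral_const_mul]
      _ ≤ ta * F a + tb * F b := by
          have h1 : (∫ x, l (g x + ⟪a, x - x₀⟫) ∂ν) ≤ F a := le_csSup (hbdd a) ⟨ν, hν, hW, rfl⟩
          have h2 : (∫ x, l (g x + ⟪b, x - x₀⟫) ∂ν) ≤ F b := le_csSup (hbdd b) ⟨ν, hν, hW, rfl⟩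
          have := mul_le_mul_of_nonneg_left h1 hta
          have := mul_le_mul_of_nonneg_left h2 htb
          linarith
  have hFcont : Continuous F := by
    rw [← continuousOn_univ]
    exact hFconv.continuousOn isOpen_univ
  refine ⟨hbdd, ?_⟩
  by_cases hlconst : ∀ t : ℝ, l t = l 0
  · -- constant loss: any point is optimal
    have hSeq : ∀ a : (EuclideanSpace ℝ (Fin d)), Sa a = Sa 0 := by
      intro a
      rw [hSadef]
      simp only [hlconst]
    refine ⟨0, fun a => ?_⟩
    show F 0 ≤ F a
    exact le_of_eq (congrArg sSup (hSeq a)).symm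
  -- non-constant case: l tends to infinity
  push_neg at hlconst
  obtain ⟨t₁, ht₁⟩ := hlconst
  obtain ⟨u, v, huv, hluv⟩ : ∃ u v : ℝ, u < v ∧ l u < l v := by
    rcases lt_trichotomy t₁ 0 with h | h | h
    · exact ⟨t₁, 0, h, lt_of_le_of_ne (hmono h.le) ht₁⟩
    · exact absurd (h ▸ rfl : l t₁ = l t₁) (by rw [h] at ht₁; exact fun _ => ht₁ rfl)
    · exact ⟨0, t₁, h, lt_of_le_of_ne (hmono h.le) (fun he => ht₁ he.symm)⟩
  have hs : 0 < (l v - l u) / (v - u) := div_pos (by linarith) (by linarith)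
  have hslope : ∀ w : ℝ, v < w → l v + (l v - l u) / (v - u) * (w - v) ≤ l w := by
    intro w hvw
    have h1 := hconv.slope_mono_adjacent (Set.mem_univ u) (Set.mem_univ w) huv hvw
    have h2 := (le_div_iff₀ (sub_pos.2 hvw)).1 h1
    linarith
  have hLtop : Tendsto l atTop atTop := by
    have h1 : Tendsto (fun w : ℝ => w - v) atTop atTop :=
      tendsto_atTop_add_const_right _ (-v) tendsto_id
    have h2 : Tendsto (fun w : ℝ => l v + (l v - l u) / (v - u) * (w - v)) atTop atTop :=
      tendsto_atTop_add_const_left _ (l v) (h1.const_mul_atTop hs)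
    exact tendsto_atTop_mono' atTop
      ((eventually_gt_atTop v).mono fun w hw => hslope w hw) h2
  -- the sublevel set is bounded
  set S : Set (EuclideanSpace ℝ (Fin d)) := {a | F a ≤ F 0} with hSdef
  have hS0 : (0 : EuclideanSpace ℝ (Fin d)) ∈ S := by
    simp only [hSdef, Set.mem_setOf_eq]; exact le_refl _
  have hSclosed : IsClosed S := isClosed_le hFcont continuous_const
  have hSbdd : Bornology.IsBounded S := by
    by_contra hub
    rw [isBounded_iff_forall_norm_le] at hub
    push_neg at hub
    choose aseq haS han using fun n : ℕ => hub ((n : ℝ) + 1)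
    have hanpos : ∀ n, (0:ℝ) < ‖aseq n‖ := fun n => lt_of_le_of_lt (by positivity) (han n)
    have hane : ∀ n, aseq n ≠ 0 := fun n => norm_ne_zero_iff.1 (hanpos n).ne'
    have husphere : ∀ n, ‖aseq n‖⁻¹ • aseq n ∈ Metric.sphere (0 : EuclideanSpace ℝ (Fin d)) 1 := by
      intro n
      rw [mem_sphere_zero_iff_norm, norm_smul, norm_inv, norm_norm,
        inv_mul_cancel₀ (hanpos n).ne']
    obtain ⟨atil, hatil, φ, hφmono, hφtend⟩ :=
      (isCompact_sphere (0 : EuclideanSpace ℝ (Fin d)) 1).tendsto_subseq husphere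
    rw [mem_sphere_zero_iff_norm] at hatil
    have hatilne : atil ≠ 0 := by intro h; rw [h, norm_zero] at hatil; norm_num at hatil
    have hμA := hnd atil hatilne
    -- a set of positive measure on which the linear part is bounded below
    set CC : ℕ → Set (EuclideanSpace ℝ (Fin d)) := fun n =>
      {x | 1/((n:ℝ)+1) ≤ ⟪atil, x - x₀⟫ ∧ ‖x - x₀‖ ≤ (n:ℝ)+1 ∧ -((n:ℝ)+1) ≤ g x} with hCCdef
    have hsub : {x | 0 < ⟪atil, x - x₀⟫} ⊆ ⋃ n, CC n := by
      intro x hx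
      have hip : (0:ℝ) < ⟪atil, x - x₀⟫ := hx
      obtain ⟨n, hn⟩ := exists_nat_ge (max (1/⟪atil, x - x₀⟫) (max ‖x - x₀‖ (-(g x))))
      have h1 : 1/⟪atil, x - x₀⟫ ≤ (n:ℝ) := le_trans (le_max_left _ _) hn
      have h2 : ‖x - x₀‖ ≤ (n:ℝ) := le_trans ((le_max_left _ _).trans (le_max_right _ _)) hn
      have h3 : -(g x) ≤ (n:ℝ) := le_trans ((le_max_right _ _).trans (le_max_right _ _)) hn
      refine Set.mem_iUnion.2 ⟨n, ?_, by linarith, by linarith⟩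
      show 1/((n:ℝ)+1) ≤ ⟪atil, x - x₀⟫
      have h4 : (1:ℝ) ≤ ((n:ℝ)+1) * ⟪atil, x - x₀⟫ := by
        rw [div_le_iff₀ hip] at h1
        nlinarith
      rw [div_le_iff₀ (by positivity : (0:ℝ) < (n:ℝ)+1)]
      nlinarith
    obtain ⟨n₀, hn₀⟩ : ∃ n, μ (CC n) ≠ 0 := by
      by_contra h
      push_neg at h
      exact hμA (measure_mono_null hsub (measure_iUnion_null h))
    set B : Set (EuclideanSpace ℝ (Fin d)) := CC n₀ with hBdef
    have hBmeas : MeasurableSet B := by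
      have hB1 : MeasurableSet {x : EuclideanSpace ℝ (Fin d) | 1/((n₀:ℝ)+1) ≤ ⟪atil, x - x₀⟫} :=
        (isClosed_le continuous_const
          (continuous_const.inner (continuous_id.sub continuous_const))).measurableSet
      have hB2 : MeasurableSet {x : EuclideanSpace ℝ (Fin d) | ‖x - x₀‖ ≤ (n₀:ℝ)+1} :=
        (isClosed_le (continuous_id.sub continuous_const).norm continuous_const).measurableSet
      have hB3 : MeasurableSet {x : EuclideanSpace ℝ (Fin d) | -((n₀:ℝ)+1) ≤ g x} :=
        measurableSet_le measurable_const hg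
      have : B = {x : EuclideanSpace ℝ (Fin d) | 1/((n₀:ℝ)+1) ≤ ⟪atil, x - x₀⟫} ∩
          ({x | ‖x - x₀‖ ≤ (n₀:ℝ)+1} ∩ {x | -((n₀:ℝ)+1) ≤ g x}) := by
        rfl
      rw [this]
      exact hB1.inter (hB2.inter hB3)
    have hβ : 0 < (μ B).toReal := ENNReal.toReal_pos hn₀ (measure_ne_top μ B)
    have hε : (0:ℝ) < 1/((n₀:ℝ)+1) := by positivity
    have hKb : (0:ℝ) < (n₀:ℝ)+1 := by positivity
    -- lower bound for F along directions close to atil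
    have hlow : ∀ bvec : EuclideanSpace ℝ (Fin d), bvec ≠ 0 →
        ‖‖bvec‖⁻¹ • bvec - atil‖ ≤ (1/((n₀:ℝ)+1))/(2*((n₀:ℝ)+1)) →
        (μ B).toReal * l (-((n₀:ℝ)+1) + ‖bvec‖ * ((1/((n₀:ℝ)+1))/2)) - |m| ≤ F bvec := by
      intro bvec hb0 hbdir
      obtain ⟨c, hc, hcb⟩ := hIa bvec
      have hint := (hcb μ inferInstance hself).1
      have hbn : (0:ℝ) < ‖bvec‖ := norm_pos_iff.2 hb0
      have hptB : ∀ x ∈ B, l (-((n₀:ℝ)+1) + ‖bvec‖ * ((1/((n₀:ℝ)+1))/2)) ≤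
          l (g x + ⟪bvec, x - x₀⟫) := by
        intro x hx
        obtain ⟨h1, h2, h3⟩ := hx
        apply hmono
        have hu : ⟪bvec, x - x₀⟫ = ‖bvec‖ * ⟪‖bvec‖⁻¹ • bvec, x - x₀⟫ := by
          rw [real_inner_smul_left]
          field_simp
        have hcs : |⟪‖bvec‖⁻¹ • bvec - atil, x - x₀⟫| ≤ (1/((n₀:ℝ)+1))/2 := by
          calc |⟪‖bvec‖⁻¹ • bvec - atil, x - x₀⟫| ≤ ‖‖bvec‖⁻¹ • bvec - atil‖ * ‖x - x₀‖ :=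
              abs_real_inner_le_norm _ _
            _ ≤ ((1/((n₀:ℝ)+1))/(2*((n₀:ℝ)+1))) * ((n₀:ℝ)+1) :=
              mul_le_mul hbdir h2 (norm_nonneg _) (by positivity)
            _ = (1/((n₀:ℝ)+1))/2 := by
              field_simp
        have hsplit : ⟪‖bvec‖⁻¹ • bvec, x - x₀⟫ =
            ⟪atil, x - x₀⟫ + ⟪‖bvec‖⁻¹ • bvec - atil, x - x₀⟫ := by
          rw [inner_sub_left]; ring
        have hinner2 : (1/((n₀:ℝ)+1))/2 ≤ ⟪‖bvec‖⁻¹ • bvec, x - x₀⟫ := by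
          have := abs_le.1 hcs
          rw [hsplit]
          linarith [h1, this.1]
        have hinner3 : ‖bvec‖ * ((1/((n₀:ℝ)+1))/2) ≤ ⟪bvec, x - x₀⟫ := by
          rw [hu]
          exact mul_le_mul_of_nonneg_left hinner2 (norm_nonneg _)
        linarith
      have hsplitInt := integral_add_compl hBmeas hint
      have hB1 : (μ B).toReal * l (-((n₀:ℝ)+1) + ‖bvec‖ * ((1/((n₀:ℝ)+1))/2)) ≤
          ∫ x in B, l (g x + ⟪bvec, x - x₀⟫) ∂μ := by
        have h := setIntegral_mono_on (integrableOn_const (measure_ne_top μ B))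
          hint.integrableOn hBmeas hptB
        rwa [setIntegral_const, smul_eq_mul] at h
      have hB2 : (μ Bᶜ).toReal * m ≤ ∫ x in Bᶜ, l (g x + ⟪bvec, x - x₀⟫) ∂μ := by
        have h := setIntegral_mono_on (integrableOn_const (measure_ne_top μ Bᶜ))
          hint.integrableOn hBmeas.compl (fun x _ => hml (g x + ⟪bvec, x - x₀⟫))
        rwa [setIntegral_const, smul_eq_mul] at h
      have hμc : (μ Bᶜ).toReal ≤ 1 := by
        have h := prob_le_one (μ := μ) (s := Bᶜ)
        calc (μ Bᶜ).toReal ≤ (1 : ℝ≥0∞).toReal := ENNReal.toReal_mono (by norm_num) h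
          _ = 1 := by simp
      have hmc : -|m| ≤ (μ Bᶜ).toReal * m := by
        nlinarith [neg_abs_le m, abs_nonneg m, ENNReal.toReal_nonneg (a := μ Bᶜ)]
      have := hFlb bvec
      linarith
    -- the contradiction along the subsequence
    have hφk : ∀ k : ℕ, (k:ℝ) + 1 ≤ ‖aseq (φ k)‖ := by
      intro k
      have h1 : (k:ℝ) ≤ (φ k : ℝ) := Nat.cast_le.2 (hφmono.le_apply)
      have := han (φ k)
      linarith
    have htb : Tendsto (fun k : ℕ =>
        (μ B).toReal * l (-((n₀:ℝ)+1) + ‖aseq (φ k)‖ * ((1/((n₀:ℝ)+1))/2)) - |m|) atTop atTop := by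
      have h1 : Tendsto (fun k : ℕ => -((n₀:ℝ)+1) + ((k:ℝ)+1) * ((1/((n₀:ℝ)+1))/2)) atTop atTop := by
        apply tendsto_atTop_add_const_left
        exact (tendsto_atTop_add_const_right _ 1 tendsto_natCast_atTop_atTop).atTop_mul_const
          (by positivity)
      have h2 : Tendsto (fun k : ℕ => -((n₀:ℝ)+1) + ‖aseq (φ k)‖ * ((1/((n₀:ℝ)+1))/2))
          atTop atTop := by
        refine tendsto_atTop_mono (fun k => ?_) h1
        have := hφk k
        have hh : ((k:ℝ)+1) * ((1/((n₀:ℝ)+1))/2) ≤ ‖aseq (φ k)‖ * ((1/((n₀:ℝ)+1))/2) :=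
          mul_le_mul_of_nonneg_right this (by positivity)
        linarith
      have h3 := (hLtop.comp h2).const_mul_atTop hβ
      exact tendsto_atTop_add_const_right _ (-|m|) h3
    have hev1 : ∀ᶠ k in atTop, ‖‖aseq (φ k)‖⁻¹ • aseq (φ k) - atil‖ ≤ (1/((n₀:ℝ)+1))/(2*((n₀:ℝ)+1)) := by
      have := Metric.tendsto_atTop.1 hφtend ((1/((n₀:ℝ)+1))/(2*((n₀:ℝ)+1))) (by positivity)
      obtain ⟨N, hN⟩ := this
      exact eventually_atTop.2 ⟨N, fun k hk => by
        have := hN k hk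
        rw [dist_eq_norm] at this
        exact this.le⟩
    have hev2 : ∀ᶠ k in atTop, F 0 <
        (μ B).toReal * l (-((n₀:ℝ)+1) + ‖aseq (φ k)‖ * ((1/((n₀:ℝ)+1))/2)) - |m| :=
      htb.eventually_gt_atTop (F 0)
    obtain ⟨k, hk1, hk2⟩ := (hev1.and hev2).exists
    have hchain := hlow (aseq (φ k)) (hane (φ k)) hk1
    have hSk : F (aseq (φ k)) ≤ F 0 := haS (φ k)
    linarith
  -- conclude: minimize the continuous F on the compact sublevel set
  have hScompact : IsCompact S := Metric.isCompact_of_isClosed_isBounded hSclosed hSbdd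
  obtain ⟨astar, hastar, hminOn⟩ := hScompact.exists_isMinOn ⟨0, hS0⟩ hFcont.continuousOn
  refine ⟨astar, fun a => ?_⟩
  show F astar ≤ F a
  by_cases ha : a ∈ S
  · exact isMinOn_iff.1 hminOn a ha
  · have h0 : F astar ≤ F 0 := isMinOn_iff.1 hminOn 0 hS0
    have h1 : F 0 < F a := lt_of_not_ge ha
    linarith
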